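/- Every finite graph G has an lcw expression using at most lcw(G) + 1 labels in which one label is reserved as an insertion label: every vertex is inserted with this reserved label and is immediately connected to all of its neighbors that have already been inserted (by edge operations followed by a relabeling) before any further vertex is inserted. -/

import Mathlib

/-! ## Common definitions

Linear clique-width (lcw) expressions and derived notions, following
Brignall–Lozin–Stacho, "Bichain graphs: geometric model and universal graphs" /
"Linear clique-width of subclasses of cographs".

An lcw expression over a label alphabet `L` is a list of operations:
insert a new vertex with a given label, add all edges between two distinct
label classes, or relabel one label class to another.  Vertices are indexed
by the natural numbers `0, 1, 2, …` in order of insertion. -/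

/-- The three kinds of operations of an lcw expression. -/
inductive LcwOp (L : Type) where
  | insert : L → LcwOp L
  | join : L → L → LcwOp L
  | relabel : L → L → LcwOp L

/-- The state while executing an lcw expression: the number `n` of vertices
inserted so far (the vertices are `0, …, n-1`), the adjacency relation built
so far, and the current labeling (`none` for indices not yet inserted). -/
structure LcwState (L : Type) where
  n : ℕ
  adj : ℕ → ℕ → Prop
  lab : ℕ → Option L

/-- The initial, empty state. -/
def LcwState.init (L : Type) : LcwState L :=
  ⟨0, fun _ _ => False, fun _ => none⟩

/-- Executing one operation. -/
def LcwState.step {L : Type} [DecidableEq L] (s : LcwState L) : LcwOp L → LcwState L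
  | .insert a => ⟨s.n + 1, s.adj, fun v => if v = s.n then some a else s.lab v⟩
  | .join i j =>
      ⟨s.n,
       fun u v => s.adj u v ∨
         (u ≠ v ∧ ((s.lab u = some i ∧ s.lab v = some j) ∨
                   (s.lab u = some j ∧ s.lab v = some i))),
       s.lab⟩
  | .relabel i j => ⟨s.n, s.adj, fun v => if s.lab v = some i then some j else s.lab v⟩

/-- Executing an lcw expression (a list of operations) from the empty state. -/
def runLcw {L : Type} [DecidableEq L] (e : List (LcwOp L)) : LcwState L :=
  e.foldl LcwState.step (LcwState.init L)

/-- Well-formedness: every edge-adding operation uses two distinct labels. -/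
def WfExpr {L : Type} (e : List (LcwOp L)) : Prop :=
  ∀ op ∈ e, ∀ i j : L, op = LcwOp.join i j → i ≠ j

/-- The expression `e` builds the graph `G`, where the bijection
`f` sends each vertex of `G` to its insertion index (so `f` records the
insertion order of the vertices). -/
def BuildsVia {L V : Type} [DecidableEq L] [Fintype V] (e : List (LcwOp L))
    (G : SimpleGraph V) (f : V → ℕ) : Prop :=
  WfExpr e ∧ Function.Injective f ∧ (runLcw e).n = Fintype.card V ∧
    (∀ v, f v < (runLcw e).n) ∧ ∀ u v, G.Adj u v ↔ (runLcw e).adj (f u) (f v)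

/-- The expression `e` builds the graph `G`. -/
def Builds {L V : Type} [DecidableEq L] [Fintype V] (e : List (LcwOp L))
    (G : SimpleGraph V) : Prop :=
  ∃ f : V → ℕ, BuildsVia e G f

/-- The linear clique-width of a finite graph: the least size of a label
alphabet over which some lcw expression builds `G`.  (An expression over
`Fin k` is an expression using `k` labels; an *efficient* expression for `G`
is one over `Fin (lcw G)`.) -/
noncomputable def lcw {V : Type} [Fintype V] (G : SimpleGraph V) : ℕ :=
  sInf {k : ℕ | ∃ e : List (LcwOp (Fin k)), Builds e G}

/-- `ℓ` is a sink label of the expression `e`: it is never used in an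
edge-adding operation and vertices labeled `ℓ` are never relabeled. -/
def SinkLabel {L : Type} (e : List (LcwOp L)) (ℓ : L) : Prop :=
  (∀ op ∈ e, ∀ i j : L, op = LcwOp.join i j → i ≠ ℓ ∧ j ≠ ℓ) ∧
  (∀ op ∈ e, ∀ j : L, op = LcwOp.relabel ℓ j → j = ℓ)

/-- An expression is sink-free if no label is a sink label. -/
def SinkFree {L : Type} (e : List (LcwOp L)) : Prop :=
  ∀ ℓ : L, ¬ SinkLabel e ℓ

/-- The disjoint union of two graphs. -/
def GraphDisjUnion {V W : Type} (G : SimpleGraph V) (H : SimpleGraph W) :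
    SimpleGraph (V ⊕ W) where
  Adj x y :=
    match x, y with
    | Sum.inl a, Sum.inl b => G.Adj a b
    | Sum.inr a, Sum.inr b => H.Adj a b
    | _, _ => False
  symm := ⟨by
    rintro (a | a) (b | b) h
    · exact G.adj_symm h
    · exact h.elim
    · exact h.elim
    · exact H.adj_symm h⟩
  loopless := ⟨by
    rintro (a | a) h
    · exact G.irrefl h
    · exact H.irrefl h⟩

/-- The join of two graphs: their disjoint union together with all edges
between the two sides. -/
def GraphJoin {V W : Type} (G : SimpleGraph V) (H : SimpleGraph W) :
    SimpleGraph (V ⊕ W) :=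
  (GraphDisjUnion Gᶜ Hᶜ)ᶜ

/-- `H` is (isomorphic to) an induced subgraph of `G`. -/
def InducedSubgraphOf {W V : Type} (H : SimpleGraph W) (G : SimpleGraph V) : Prop :=
  ∃ f : W ↪ V, ∀ a b : W, H.Adj a b ↔ G.Adj (f a) (f b)

/-- The path `P₄` on four vertices (edges 01, 12, 23). -/
def pathP4 : SimpleGraph (Fin 4) :=
  SimpleGraph.fromRel (fun a b => (b : ℕ) = (a : ℕ) + 1)

/-- The cycle `C₄` on four vertices (edges 01, 12, 23, 30). -/
def cycleC4 : SimpleGraph (Fin 4) :=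
  SimpleGraph.fromRel (fun a b => (b : ℕ) = (a : ℕ) + 1 ∨ ((a : ℕ) = 3 ∧ (b : ℕ) = 0))

/-- The graph `2K₂` (edges 01 and 23). -/
def twoK2 : SimpleGraph (Fin 4) :=
  SimpleGraph.fromRel (fun a b => ((a : ℕ) = 0 ∧ (b : ℕ) = 1) ∨ ((a : ℕ) = 2 ∧ (b : ℕ) = 3))

/-- Cographs: the graphs with no induced `P₄`. -/
def IsCograph {V : Type} (G : SimpleGraph V) : Prop :=
  ¬ InducedSubgraphOf pathP4 G

/-- Quasi-threshold (trivially perfect) graphs: no induced `P₄` and no induced `C₄`. -/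
def IsQuasiThreshold {V : Type} (G : SimpleGraph V) : Prop :=
  ¬ InducedSubgraphOf pathP4 G ∧ ¬ InducedSubgraphOf cycleC4 G

/-- Threshold graphs: no induced `P₄`, `C₄` or `2K₂`. -/
def IsThreshold {V : Type} (G : SimpleGraph V) : Prop :=
  ¬ InducedSubgraphOf pathP4 G ∧ ¬ InducedSubgraphOf cycleC4 G ∧ ¬ InducedSubgraphOf twoK2 G

/-- A finite graph, encoded with vertex set `Fin n`.  A *class* of graphs,
i.e. a set of finite graphs closed under isomorphism, is modelled as a
hereditary set of `FinGraph`s (hereditary sets are automatically closed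
under isomorphism). -/
def FinGraph : Type := Σ n : ℕ, SimpleGraph (Fin n)

/-- The complement of a finite graph. -/
def FinGraph.compl (G : FinGraph) : FinGraph := ⟨G.1, G.2ᶜ⟩

/-- The induced-subgraph order on finite graphs. -/
def IndF (H G : FinGraph) : Prop := InducedSubgraphOf H.2 G.2

/-- A set of finite graphs is hereditary if it is closed downward under the
induced subgraph order (in particular it is closed under isomorphism). -/
def Hereditary (C : Set FinGraph) : Prop :=
  ∀ G ∈ C, ∀ H : FinGraph, IndF H G → H ∈ C

/-- The finite graph `K` is isomorphic to the graph `G`. -/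
def IsoTo {V : Type} (K : FinGraph) (G : SimpleGraph V) : Prop :=
  ∃ e : Fin K.1 ≃ V, ∀ a b, K.2.Adj a b ↔ G.Adj (e a) (e b)

/-- The class `C` contains (a copy of) the graph `G`. -/
def MemUpToIso (C : Set FinGraph) {V : Type} (G : SimpleGraph V) : Prop :=
  ∃ K ∈ C, IsoTo K G

/-- `C` is closed under disjoint unions. -/
def ClosedUnderDisjointUnions (C : Set FinGraph) : Prop :=
  ∀ G ∈ C, ∀ H ∈ C, MemUpToIso C (GraphDisjUnion (Sigma.snd G) (Sigma.snd H))

/-- `C` is closed under joins. -/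
def ClosedUnderJoins (C : Set FinGraph) : Prop :=
  ∀ G ∈ C, ∀ H ∈ C, MemUpToIso C (GraphJoin (Sigma.snd G) (Sigma.snd H))

/-- `C` is atomic: it cannot be written as the union of two proper
hereditary subclasses. -/
def AtomicClass (C : Set FinGraph) : Prop :=
  ¬ ∃ D₁ D₂ : Set FinGraph, Hereditary D₁ ∧ Hereditary D₂ ∧
      D₁ ⊂ C ∧ D₂ ⊂ C ∧ C = D₁ ∪ D₂

/-- The inflation `G[H₁, …, Hₙ]` of a graph `G` on `Fin n` by graphs
`H i` (`i : Fin n`): substitute `H i` for the vertex `i` of `G`. -/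
def inflate {n : ℕ} (G : SimpleGraph (Fin n)) (m : Fin n → ℕ)
    (H : ∀ i : Fin n, SimpleGraph (Fin (m i))) :
    SimpleGraph (Σ i : Fin n, Fin (m i)) where
  Adj x y := (x.1 ≠ y.1 ∧ G.Adj x.1 y.1) ∨ ∃ h : x.1 = y.1, (H y.1).Adj (h ▸ x.2) y.2
  symm := ⟨by
    rintro ⟨i, a⟩ ⟨j, b⟩ (⟨hne, hadj⟩ | ⟨h, hadj⟩)
    · exact Or.inl ⟨hne.symm, G.adj_symm hadj⟩
    · cases h
      exact Or.inr ⟨rfl, (H i).adj_symm hadj⟩⟩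
  loopless := ⟨by
    rintro ⟨i, a⟩ (⟨hne, _⟩ | ⟨h, hadj⟩)
    · exact hne rfl
    · exact (H i).irrefl hadj⟩

/-- The inflation `C[D]` of the class `C` by the class `D`: all graphs
isomorphic to an inflation of a graph of `C` by graphs of `D`. -/
def classInflate (C D : Set FinGraph) : Set FinGraph :=
  {K | ∃ (n : ℕ) (G : SimpleGraph (Fin n)) (m : Fin n → ℕ)
        (H : ∀ i : Fin n, SimpleGraph (Fin (m i))),
      (⟨n, G⟩ : FinGraph) ∈ C ∧ (∀ i, (⟨m i, H i⟩ : FinGraph) ∈ D) ∧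
      IsoTo K (inflate G m H)}

/-- The class of threshold graphs (as finite graphs). -/
def thresholdClass : Set FinGraph := {G : FinGraph | IsThreshold G.2}

/-- Vertex types of the sequence witnessing unbounded linear clique-width:
`qtV 0` carries `G₁ = K₂` and `qtV (k+1)` carries
`G_{k+2} = K₁ ∗ ((G_{k+1} ∪ G_{k+1}) ∪ (G_{k+1} ∪ G_{k+1}))`. -/
def qtV : ℕ → Type
  | 0 => Fin 2
  | k + 1 => Unit ⊕ ((qtV k ⊕ qtV k) ⊕ (qtV k ⊕ qtV k))

instance qtVFintype : ∀ k : ℕ, Fintype (qtV k)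
  | 0 => inferInstanceAs (Fintype (Fin 2))
  | k + 1 =>
      letI := qtVFintype k
      inferInstanceAs (Fintype (Unit ⊕ ((qtV k ⊕ qtV k) ⊕ (qtV k ⊕ qtV k))))

/-- The graphs `G₁, G₂, …` of the paper, reindexed so that `qtG k = G_{k+1}`:
`qtG 0 = K₂` and `qtG (k+1) = K₁ ∗ ((qtG k ∪ qtG k) ∪ (qtG k ∪ qtG k))`. -/
def qtG : ∀ k : ℕ, SimpleGraph (qtV k)
  | 0 => (⊤ : SimpleGraph (Fin 2))
  | k + 1 =>
      GraphJoin (⊥ : SimpleGraph Unit)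
        (GraphDisjUnion (GraphDisjUnion (qtG k) (qtG k)) (GraphDisjUnion (qtG k) (qtG k)))

/-! ### Auxiliary infrastructure for statement_2 -/

section Aux

open List

variable {L : Type} [DecidableEq L]

/-- run-state well-formedness invariant -/
def WfS (s : LcwState L) : Prop :=
  (∀ x, s.n ≤ x → s.lab x = none) ∧
  (∀ x, x < s.n → ∃ b, s.lab x = some b) ∧
  (∀ x y, s.adj x y → x < s.n ∧ y < s.n) ∧
  (∀ x y, s.adj x y → s.adj y x) ∧
  (∀ x, ¬ s.adj x x)

omit [DecidableEq L] in
lemma wfS_init : WfS (LcwState.init L) :=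
  ⟨fun _ _ => rfl, fun x hx => absurd hx (Nat.not_lt_zero x),
   fun _ _ h => h.elim, fun _ _ h => h.elim, fun _ h => h⟩

lemma n_step_le (s : LcwState L) (op : LcwOp L) : s.n ≤ (s.step op).n := by
  cases op
  · exact Nat.le_succ _
  · exact le_rfl
  · exact le_rfl

lemma n_fold_le (q : List (LcwOp L)) : ∀ s : LcwState L, s.n ≤ (q.foldl LcwState.step s).n := by
  induction q with
  | nil => intro s; exact le_rfl
  | cons op q ih => intro s; exact le_trans (n_step_le s op) (ih (s.step op))

lemma wfS_step (s : LcwState L) (op : LcwOp L) (h : WfS s) : WfS (s.step op) := by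
  obtain ⟨h1, h2, h3, h4, h5⟩ := h
  cases op with
  | insert a =>
      have hne : (s.step (LcwOp.insert a)).n = s.n + 1 := rfl
      refine ⟨?_, ?_, ?_, h4, h5⟩
      · intro x hx
        rw [hne] at hx
        show (if x = s.n then some a else s.lab x) = none
        rw [if_neg (by omega)]
        exact h1 x (by omega)
      · intro x hx
        rw [hne] at hx
        show ∃ b, (if x = s.n then some a else s.lab x) = some b
        by_cases hxn : x = s.n
        · exact ⟨a, by rw [if_pos hxn]⟩
        · obtain ⟨b, hb⟩ := h2 x (by omega)
          exact ⟨b, by rw [if_neg hxn]; exact hb⟩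
      · intro x y hxy
        rw [hne]
        exact ⟨lt_of_lt_of_le (h3 x y hxy).1 (Nat.le_succ _),
               lt_of_lt_of_le (h3 x y hxy).2 (Nat.le_succ _)⟩
  | join i j =>
      refine ⟨h1, h2, ?_, ?_, ?_⟩
      · intro x y hxy
        rcases hxy with h | ⟨hne, hc⟩
        · exact h3 x y h
        · constructor
          · by_contra hx
            have := h1 x (le_of_not_gt hx)
            rcases hc with ⟨hx', _⟩ | ⟨hx', _⟩ <;> rw [this] at hx' <;> simp at hx'
          · by_contra hy
            have := h1 y (le_of_not_gt hy)
            rcases hc with ⟨_, hy'⟩ | ⟨_, hy'⟩ <;> rw [this] at hy' <;> simp at hy'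
      · intro x y hxy
        rcases hxy with h | ⟨hne, hc⟩
        · exact Or.inl (h4 x y h)
        · exact Or.inr ⟨hne.symm, hc.symm.imp And.symm And.symm⟩
      · intro x hx
        rcases hx with h | ⟨hne, _⟩
        · exact h5 x h
        · exact hne rfl
  | relabel i j =>
      refine ⟨?_, ?_, h3, h4, h5⟩
      · intro x hx
        simp only [LcwState.step]
        rw [h1 x hx]
        simp
      · intro x hx
        obtain ⟨b, hb⟩ := h2 x hx
        simp only [LcwState.step]
        rw [hb]
        by_cases hbi : b = i
        · exact ⟨j, by rw [if_pos (by rw [hbi])]⟩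
        · exact ⟨b, by rw [if_neg (by simpa using hbi)]⟩

lemma wfS_fold (q : List (LcwOp L)) : ∀ s : LcwState L, WfS s → WfS (q.foldl LcwState.step s) := by
  induction q with
  | nil => intro s h; exact h
  | cons op q ih => intro s h; exact ih _ (wfS_step s op h)

/-- Folding a list of join operations: effect on the state. -/
lemma fold_joins (J : List (LcwOp L)) :
    ∀ (s : LcwState L), (∀ op ∈ J, ∃ i j, op = LcwOp.join i j) →
    (J.foldl LcwState.step s).n = s.n ∧
    (J.foldl LcwState.step s).lab = s.lab ∧
    (∀ x y, (J.foldl LcwState.step s).adj x y ↔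
      s.adj x y ∨ ∃ i j, LcwOp.join i j ∈ J ∧ x ≠ y ∧
        ((s.lab x = some i ∧ s.lab y = some j) ∨ (s.lab x = some j ∧ s.lab y = some i))) := by
  induction J with
  | nil => intro s _; exact ⟨rfl, rfl, fun x y => by simp⟩
  | cons op J ih =>
      intro s hJ
      obtain ⟨i, j, rfl⟩ := hJ _ (List.mem_cons_self)
      have hJ' : ∀ op ∈ J, ∃ i j, op = LcwOp.join i j := fun op hop => hJ op (List.mem_cons_of_mem _ hop)
      obtain ⟨hn, hlab, hadj⟩ := ih (s.step (LcwOp.join i j)) hJ'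
      refine ⟨by rw [List.foldl_cons]; exact hn, by rw [List.foldl_cons]; exact hlab, ?_⟩
      intro x y
      rw [List.foldl_cons, hadj x y]
      show (s.adj x y ∨ (x ≠ y ∧ ((s.lab x = some i ∧ s.lab y = some j) ∨
              (s.lab x = some j ∧ s.lab y = some i)))) ∨ _ ↔ _
      show _ ↔ s.adj x y ∨ ∃ p q, LcwOp.join p q ∈ LcwOp.join i j :: J ∧ x ≠ y ∧
        ((s.lab x = some p ∧ s.lab y = some q) ∨ (s.lab x = some q ∧ s.lab y = some p))
      constructor
      · rintro ((h | h) | ⟨p, q, hpq, hne, hc⟩)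
        · exact Or.inl h
        · exact Or.inr ⟨i, j, List.mem_cons_self, h⟩
        · exact Or.inr ⟨p, q, List.mem_cons_of_mem _ hpq, hne, hc⟩
      · rintro (h | ⟨p, q, hpq, hne, hc⟩)
        · exact Or.inl (Or.inl h)
        · rcases List.mem_cons.1 hpq with heq | hmem
          · obtain ⟨rfl, rfl⟩ : p = i ∧ q = j := by
              injection heq with h1 h2; exact ⟨h1, h2⟩
            exact Or.inl (Or.inr ⟨hne, hc⟩)
          · exact Or.inr ⟨p, q, hmem, hne, hc⟩

/-- Two same-labeled inserted vertices end up with the same adjacency to any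
vertex `v`. -/
lemma label_adj (q : List (LcwOp L)) :
    ∀ (s : LcwState L) (u w v : ℕ), u < s.n → w < s.n → u ≠ v → w ≠ v →
    s.lab u = s.lab w → (s.adj u v ↔ s.adj w v) → (s.adj v u ↔ s.adj v w) →
    ((q.foldl LcwState.step s).adj u v ↔ (q.foldl LcwState.step s).adj w v) ∧
    ((q.foldl LcwState.step s).adj v u ↔ (q.foldl LcwState.step s).adj v w) := by
  induction q with
  | nil => intro s u w v _ _ _ _ _ h1 h2; exact ⟨h1, h2⟩
  | cons op q ih =>
      intro s u w v hu hw huv hwv hl h1 h2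
      show ((q.foldl LcwState.step (s.step op)).adj u v ↔ _) ∧ _
      cases op with
      | insert a =>
          have hne : (s.step (LcwOp.insert a)).n = s.n + 1 := rfl
          refine ih (s.step (LcwOp.insert a)) u w v (by rw [hne]; omega)
            (by rw [hne]; omega) huv hwv ?_ h1 h2
          show (if u = s.n then some a else s.lab u) = (if w = s.n then some a else s.lab w)
          rw [if_neg (by omega), if_neg (by omega)]
          exact hl
      | join i j =>
          refine ih (s.step (LcwOp.join i j)) u w v hu hw huv hwv hl ?_ ?_
          · show s.adj u v ∨ _ ↔ s.adj w v ∨ _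
            rw [hl]
            constructor
            · rintro (h | h)
              · exact Or.inl (h1.1 h)
              · exact Or.inr ⟨hwv, h.2⟩
            · rintro (h | h)
              · exact Or.inl (h1.2 h)
              · exact Or.inr ⟨huv, h.2⟩
          · show s.adj v u ∨ _ ↔ s.adj v w ∨ _
            rw [hl]
            constructor
            · rintro (h | h)
              · exact Or.inl (h2.1 h)
              · exact Or.inr ⟨(Ne.symm hwv), h.2⟩
            · rintro (h | h)
              · exact Or.inl (h2.2 h)
              · exact Or.inr ⟨(Ne.symm huv), h.2⟩
      | relabel i j =>
          refine ih (s.step (LcwOp.relabel i j)) u w v hu hw huv hwv ?_ h1 h2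
          show (if s.lab u = some i then some j else s.lab u) =
               (if s.lab w = some i then some j else s.lab w)
          rw [hl]

end Aux

section Build

open List

variable {L : Type} [DecidableEq L]

lemma run_inserts (ls : List L) :
    ∀ s : LcwState L,
    ((ls.map LcwOp.insert).foldl LcwState.step s).n = s.n + ls.length ∧
    ((ls.map LcwOp.insert).foldl LcwState.step s).adj = s.adj ∧
    (∀ x, ((ls.map LcwOp.insert).foldl LcwState.step s).lab x =
      if s.n ≤ x ∧ x < s.n + ls.length then ls[x - s.n]? else s.lab x) := by
  induction ls with
  | nil =>
      intro s
      refine ⟨rfl, rfl, fun x => ?_⟩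
      rw [List.length_nil, if_neg (by omega)]
      rfl
  | cons a ls ih =>
      intro s
      obtain ⟨hn, hadj, hlab⟩ := ih (s.step (LcwOp.insert a))
      have hn1 : (s.step (LcwOp.insert a)).n = s.n + 1 := rfl
      rw [List.map_cons, List.foldl_cons, List.length_cons]
      refine ⟨by rw [hn, hn1]; omega, hadj, ?_⟩
      intro x
      rw [hlab x, hn1]
      by_cases hx : s.n + 1 ≤ x ∧ x < s.n + 1 + ls.length
      · rw [if_pos hx, if_pos (by omega)]
        have hxs : x - s.n = (x - (s.n + 1)) + 1 := by omega
        rw [hxs, List.getElem?_cons_succ]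
      · rw [if_neg hx]
        show (if x = s.n then some a else s.lab x) = _
        by_cases hxn : x = s.n
        · rw [if_pos hxn, if_pos (by omega), hxn, Nat.sub_self, List.getElem?_cons_zero]
        · rw [if_neg hxn, if_neg (by omega)]

lemma build_exists {V : Type} [Fintype V] (G : SimpleGraph V) :
    ∃ e : List (LcwOp (Fin (Fintype.card V))), Builds e G := by
  classical
  set N := Fintype.card V with hN
  set σ := (Fintype.equivFin V) with hσ
  set ins : List (LcwOp (Fin N)) := (List.finRange N).map LcwOp.insert with hins
  set joins : List (LcwOp (Fin N)) := (List.finRange N).flatMap (fun i =>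
      (List.finRange N).filterMap (fun j =>
        if G.Adj (σ.symm i) (σ.symm j) ∧ i < j then some (LcwOp.join i j) else none)) with hjoins
  have hmemj : ∀ op ∈ joins, ∃ i j, op = LcwOp.join i j ∧
      G.Adj (σ.symm i) (σ.symm j) ∧ i < j := by
    intro op hop
    rw [hjoins] at hop
    simp only [List.mem_flatMap, List.mem_filterMap, List.mem_finRange, true_and] at hop
    obtain ⟨i, j, hj⟩ := hop
    by_cases hc : G.Adj (σ.symm i) (σ.symm j) ∧ i < j
    · rw [if_pos hc] at hj
      exact ⟨i, j, (Option.some_inj.1 hj).symm, hc⟩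
    · rw [if_neg hc] at hj
      exact absurd hj (by simp)
  have hjoinmem : ∀ i j : Fin N, G.Adj (σ.symm i) (σ.symm j) → i < j →
      LcwOp.join i j ∈ joins := by
    intro i j hadj hij
    rw [hjoins]
    simp only [List.mem_flatMap, List.mem_filterMap, List.mem_finRange, true_and]
    exact ⟨i, j, by rw [if_pos ⟨hadj, hij⟩]⟩
  set s1 := (ins.foldl LcwState.step (LcwState.init (Fin N))) with hs1
  obtain ⟨hn1, hadj1, hlab1⟩ := run_inserts (List.finRange N) (LcwState.init (Fin N))
  have hn1' : s1.n = N := by rw [hs1, hins, hn1]; simp [LcwState.init]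
  have hlab1' : ∀ x (hx : x < N), s1.lab x = some ⟨x, hx⟩ := by
    intro x hx
    rw [hs1, hins, hlab1 x]
    rw [if_pos (by simp [LcwState.init]; omega)]
    show (List.finRange N)[x - 0]? = _
    rw [Nat.sub_zero, List.getElem?_eq_getElem (by simpa using hx)]
    simp
  have hlab1'' : ∀ x, N ≤ x → s1.lab x = none := by
    intro x hx
    rw [hs1, hins, hlab1 x, if_neg (by simp [LcwState.init]; omega)]
    rfl
  have hadj1' : ∀ x y, ¬ s1.adj x y := by
    intro x y
    rw [hs1, hins, hadj1]
    exact fun h => h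
  set e : List (LcwOp (Fin N)) := ins ++ joins with he
  have hrun : runLcw e = joins.foldl LcwState.step s1 := by
    rw [he, runLcw, List.foldl_append]
  obtain ⟨hn2, hlab2, hadj2⟩ := fold_joins joins s1 (fun op hop =>
    (hmemj op hop).imp fun i => fun ⟨j, h, _⟩ => ⟨j, h⟩)
  refine ⟨e, fun v => (σ v : ℕ), ?_, ?_, ?_, ?_, ?_⟩
  · -- WfExpr
    intro op hop i j hopeq
    rcases List.mem_append.1 hop with h | h
    · rw [hins] at h
      obtain ⟨b, _, rfl⟩ := List.mem_map.1 h
      exact absurd hopeq (by simp)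
    · obtain ⟨i', j', heq, _, hlt⟩ := hmemj op h
      rw [hopeq] at heq
      injection heq with e1 e2
      rw [← e1, ← e2] at hlt
      exact fun hc => absurd hlt (by rw [hc]; exact lt_irrefl _)
  · exact fun u v huv => σ.injective (Fin.val_injective huv)
  · rw [hrun, hn2, hn1']
  · intro v
    rw [hrun, hn2, hn1']
    exact (σ v).isLt
  · intro u v
    rw [hrun]
    rw [hadj2]
    constructor
    · intro h
      have hne : σ u ≠ σ v := fun hc => G.ne_of_adj h (σ.injective hc)
      have hvne : (σ u : ℕ) ≠ (σ v : ℕ) := fun hc => hne (Fin.val_injective hc)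
      rcases lt_or_gt_of_ne hne with hlt | hlt
      · refine Or.inr ⟨σ u, σ v, hjoinmem _ _ (by simpa using h) hlt, hvne, Or.inl ⟨?_, ?_⟩⟩
        · exact (hlab1' _ (σ u).isLt).trans (by simp)
        · exact (hlab1' _ (σ v).isLt).trans (by simp)
      · refine Or.inr ⟨σ v, σ u, hjoinmem _ _ (by simpa using h.symm) hlt, hvne, Or.inr ⟨?_, ?_⟩⟩
        · exact (hlab1' _ (σ u).isLt).trans (by simp)
        · exact (hlab1' _ (σ v).isLt).trans (by simp)
    · rintro (h | ⟨p, q, hpq, hne, hc⟩)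
      · exact absurd h (hadj1' _ _)
      · obtain ⟨i, j, heq, hadj', hlt⟩ := hmemj _ hpq
        injection heq with e1 e2
        subst e1; subst e2
        have hu := hlab1' _ (σ u).isLt
        have hv := hlab1' _ (σ v).isLt
        rcases hc with ⟨hx, hy⟩ | ⟨hx, hy⟩
        · rw [hu] at hx; rw [hv] at hy
          injection hx with hx; injection hy with hy
          have : p = σ u := by rw [← hx]
          have h2 : q = σ v := by rw [← hy]
          rw [this, h2] at hadj'
          simpa using hadj'
        · rw [hu] at hx; rw [hv] at hy
          injection hx with hx; injection hy with hy
          have : q = σ u := by rw [← hx]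
          have h2 : p = σ v := by rw [← hy]
          rw [this, h2] at hadj'
          exact (by simpa using hadj' : G.Adj v u).symm

end Build

section Transform

open List

variable {k : ℕ}

/-- `b` is a label class that must be joined to the newly inserted vertex. -/
def CondB (A : ℕ → ℕ → Prop) (s : LcwState (Fin k)) (b : Fin k) : Prop :=
  ∃ u, u < s.n ∧ s.lab u = some b ∧ A u s.n

open Classical in
noncomputable def joinOps (A : ℕ → ℕ → Prop) (s : LcwState (Fin k)) :
    List (LcwOp (Fin (k + 1))) :=
  ((List.finRange k).filter (fun b => decide (CondB A s b))).map
    (fun b => LcwOp.join (Fin.last k) b.castSucc)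

noncomputable def insBlock (A : ℕ → ℕ → Prop) (s : LcwState (Fin k)) (a : Fin k) :
    List (LcwOp (Fin (k + 1))) :=
  LcwOp.insert (Fin.last k) ::
    (joinOps A s ++ [LcwOp.relabel (Fin.last k) a.castSucc])

noncomputable def trf (A : ℕ → ℕ → Prop) :
    LcwState (Fin k) → List (LcwOp (Fin k)) → List (LcwOp (Fin (k + 1)))
  | _, [] => []
  | s, LcwOp.insert a :: rest => insBlock A s a ++ trf A (s.step (LcwOp.insert a)) rest
  | s, LcwOp.join i j :: rest => trf A (s.step (LcwOp.join i j)) rest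
  | s, LcwOp.relabel i j :: rest =>
      LcwOp.relabel i.castSucc j.castSucc :: trf A (s.step (LcwOp.relabel i j)) rest

/-- Simulation invariant between the original run and the transformed run. -/
def SimRel (A : ℕ → ℕ → Prop) (s : LcwState (Fin k)) (s' : LcwState (Fin (k + 1))) : Prop :=
  s'.n = s.n ∧ (∀ x, s'.lab x = (s.lab x).map Fin.castSucc) ∧
  (∀ x y, s'.adj x y ↔ (x < s.n ∧ y < s.n ∧ x ≠ y ∧ A x y))

/-- The state property required at insertion times. -/
def GoodS (A : ℕ → ℕ → Prop) (s' : LcwState (Fin (k + 1))) : Prop :=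
  (∀ v, s'.lab v ≠ some (Fin.last k)) ∧
  (∀ u v, u < s'.n → v < s'.n → (s'.adj u v ↔ (u ≠ v ∧ A u v)))

lemma rel_good (A : ℕ → ℕ → Prop) (s : LcwState (Fin k)) (s' : LcwState (Fin (k + 1)))
    (h : SimRel A s s') : GoodS A s' := by
  obtain ⟨hn, hlab, hadj⟩ := h
  constructor
  · intro v hv
    rw [hlab v] at hv
    cases hl : s.lab v with
    | none => rw [hl] at hv; simp at hv
    | some b =>
        rw [hl] at hv
        simp only [Option.map_some] at hv
        exact absurd (Option.some_inj.1 hv) (Fin.castSucc_lt_last b).ne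
  · intro u v hu hv
    rw [hadj u v, hn] at *
    constructor
    · rintro ⟨_, _, hne, hA⟩; exact ⟨hne, hA⟩
    · rintro ⟨hne, hA⟩; exact ⟨hu, hv, hne, hA⟩

lemma insBlock_ops (A : ℕ → ℕ → Prop) (s : LcwState (Fin k)) (a : Fin k) :
    ∀ op ∈ insBlock A s a, op = LcwOp.insert (Fin.last k) ∨
      (∃ b : Fin k, op = LcwOp.join (Fin.last k) b.castSucc) ∨
      op = LcwOp.relabel (Fin.last k) a.castSucc := by
  intro op hop
  rcases List.mem_cons.1 hop with h | h
  · exact Or.inl h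
  · rcases List.mem_append.1 h with h | h
    · obtain ⟨b, _, rfl⟩ := List.mem_map.1 h
      exact Or.inr (Or.inl ⟨b, rfl⟩)
    · exact Or.inr (Or.inr (List.mem_singleton.1 h))

lemma trf_ops (A : ℕ → ℕ → Prop) :
    ∀ (rest : List (LcwOp (Fin k))) (s : LcwState (Fin k)), ∀ op ∈ trf A s rest,
      op = LcwOp.insert (Fin.last k) ∨
      (∃ b : Fin k, op = LcwOp.join (Fin.last k) b.castSucc) ∨
      (∃ i j : Fin k, op = LcwOp.relabel i.castSucc j.castSucc) ∨
      (∃ a : Fin k, op = LcwOp.relabel (Fin.last k) a.castSucc) := by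
  intro rest
  induction rest with
  | nil => intro s op hop; simp [trf] at hop
  | cons o rest ih =>
      intro s op hop
      cases o with
      | insert a =>
          simp only [trf] at hop
          rcases List.mem_append.1 hop with h | h
          · rcases insBlock_ops A s a op h with h | h | h
            · exact Or.inl h
            · exact Or.inr (Or.inl h)
            · exact Or.inr (Or.inr (Or.inr ⟨a, h⟩))
          · exact ih _ op h
      | join i j =>
          simp only [trf] at hop
          exact ih _ op hop
      | relabel i j =>
          simp only [trf] at hop
          rcases List.mem_cons.1 hop with h | h
          · exact Or.inr (Or.inr (Or.inl ⟨i, j, h⟩))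
          · exact ih _ op h

lemma trf_wfExpr (A : ℕ → ℕ → Prop) (rest : List (LcwOp (Fin k))) (s : LcwState (Fin k)) :
    WfExpr (trf A s rest) := by
  intro op hop i j heq
  rcases trf_ops A rest s op hop with h | ⟨b, h⟩ | ⟨p, q, h⟩ | ⟨a, h⟩ <;> rw [heq] at h
  · exact absurd h (by simp)
  · injection h with e1 e2
    rw [e1, e2]
    exact (Fin.castSucc_lt_last b).ne'
  · exact absurd h (by simp)
  · exact absurd h (by simp)

lemma trf_insert_lab (A : ℕ → ℕ → Prop) (rest : List (LcwOp (Fin k))) (s : LcwState (Fin k)) :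
    ∀ op ∈ trf A s rest, ∀ a, op = LcwOp.insert a → a = Fin.last k := by
  intro op hop a heq
  subst heq
  rcases trf_ops A rest s _ hop with h | ⟨b, h⟩ | ⟨p, q, h⟩ | ⟨c, h⟩
  · exact LcwOp.insert.inj h
  · exact absurd h (by simp)
  · exact absurd h (by simp)
  · exact absurd h (by simp)

lemma joinOps_mem (A : ℕ → ℕ → Prop) (s : LcwState (Fin k)) (p q : Fin (k + 1)) :
    LcwOp.join p q ∈ joinOps A s ↔
      ∃ b, CondB A s b ∧ p = Fin.last k ∧ q = b.castSucc := by
  classical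
  unfold joinOps
  simp only [List.mem_map, List.mem_filter, List.mem_finRange, true_and,
    decide_eq_true_eq]
  constructor
  · rintro ⟨b, hb, heq⟩
    injection heq with e1 e2
    exact ⟨b, by simpa using hb, e1.symm, e2.symm⟩
  · rintro ⟨b, hb, rfl, rfl⟩
    exact ⟨b, by simpa using hb, rfl⟩

lemma joinOps_are_joins (A : ℕ → ℕ → Prop) (s : LcwState (Fin k)) :
    ∀ op ∈ joinOps A s, ∃ p q, op = LcwOp.join p q := by
  intro op hop
  obtain ⟨b, _, rfl⟩ := List.mem_map.1 hop
  exact ⟨_, _, rfl⟩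

lemma trf_main (A : ℕ → ℕ → Prop) (hA : ∀ x y, A x y → A y x) :
    ∀ (rest : List (LcwOp (Fin k))) (s : LcwState (Fin k)) (s' : LcwState (Fin (k + 1))),
    WfS s → SimRel A s s' →
    (∀ x y, (rest.foldl LcwState.step s).adj x y ↔ A x y) →
    SimRel A (rest.foldl LcwState.step s) ((trf A s rest).foldl LcwState.step s') ∧
    (∀ t a, (trf A s rest)[t]? = some (LcwOp.insert a) →
       GoodS A (((trf A s rest).take t).foldl LcwState.step s')) := by
  intro rest
  induction rest with
  | nil =>
      intro s s' _ hrel _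
      refine ⟨hrel, ?_⟩
      intro t a h
      simp [trf] at h
  | cons op rest ih =>
      intro s s' hwf hrel hfin
      have hwf1 : WfS (s.step op) := wfS_step s op hwf
      cases op with
      | join i j =>
          simp only [trf]
          exact ih (s.step (LcwOp.join i j)) s' hwf1 hrel hfin
      | relabel i j =>
          obtain ⟨hn, hlab, hadj⟩ := hrel
          have hrel1 : SimRel A (s.step (LcwOp.relabel i j))
              (s'.step (LcwOp.relabel i.castSucc j.castSucc)) := by
            refine ⟨hn, ?_, hadj⟩
            intro x
            show (if s'.lab x = some i.castSucc then some j.castSucc else s'.lab x)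
              = Option.map Fin.castSucc (if s.lab x = some i then some j else s.lab x)
            rw [hlab x]
            cases hsx : s.lab x with
            | none => simp
            | some b =>
                by_cases hbi : b = i
                · subst hbi; simp
                · rw [Option.map_some,
                    if_neg (fun hc => hbi (Fin.castSucc_inj.1 (Option.some_inj.1 hc))),
                    if_neg (fun hc => hbi (Option.some_inj.1 hc)), Option.map_some]
          obtain ⟨H1, H2⟩ := ih (s.step (LcwOp.relabel i j))
            (s'.step (LcwOp.relabel i.castSucc j.castSucc)) hwf1 hrel1 hfin
          constructor
          · simpa only [trf, List.foldl_cons] using H1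
          · intro t a h
            simp only [trf] at h ⊢
            cases t with
            | zero => simp at h
            | succ t' =>
                rw [List.getElem?_cons_succ] at h
                rw [List.take_succ_cons]
                exact H2 t' a h
      | insert a =>
          obtain ⟨hn, hlab, hadj⟩ := hrel
          obtain ⟨w1, w2, w3, w4, w5⟩ := hwf
          set sA := s'.step (LcwOp.insert (Fin.last k)) with hsA
          have hsAn : sA.n = s.n + 1 := by
            show s'.n + 1 = s.n + 1
            rw [hn]
          have hsAlab : ∀ x, sA.lab x =
              if x = s.n then some (Fin.last k) else (s.lab x).map Fin.castSucc := by
            intro x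
            show (if x = s'.n then some (Fin.last k) else s'.lab x) = _
            rw [hn, hlab x]
          have labA_last : ∀ x, sA.lab x = some (Fin.last k) ↔ x = s.n := by
            intro x
            rw [hsAlab x]
            by_cases hxn : x = s.n
            · rw [if_pos hxn]; simp [hxn]
            · rw [if_neg hxn]
              constructor
              · intro h
                cases hsx : s.lab x with
                | none => rw [hsx] at h; simp at h
                | some b =>
                    rw [hsx, Option.map_some] at h
                    exact absurd (Option.some_inj.1 h) (Fin.castSucc_lt_last b).ne
              · intro h; exact absurd h hxn
          have labA_cs : ∀ x (b : Fin k), sA.lab x = some b.castSucc ↔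
              (x ≠ s.n ∧ s.lab x = some b) := by
            intro x b
            rw [hsAlab x]
            by_cases hxn : x = s.n
            · rw [if_pos hxn]
              constructor
              · intro h
                exact absurd (Option.some_inj.1 h) (Fin.castSucc_lt_last b).ne'
              · rintro ⟨h, _⟩; exact absurd hxn h
            · rw [if_neg hxn]
              constructor
              · intro h
                cases hsx : s.lab x with
                | none => rw [hsx] at h; simp at h
                | some c =>
                    rw [hsx, Option.map_some] at h
                    exact ⟨hxn, Option.some_inj.2 (Fin.castSucc_inj.1 (Option.some_inj.1 h))⟩
              · rintro ⟨_, h⟩; rw [h, Option.map_some]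
          obtain ⟨hBn, hBlab, hBadj⟩ := fold_joins (joinOps A s) sA (joinOps_are_joins A s)
          set sB := (joinOps A s).foldl LcwState.step sA with hsB
          set s2 := sB.step (LcwOp.relabel (Fin.last k) a.castSucc) with hs2
          -- key fact: same-labeled vertices have equal adjacency to the new vertex
          have hsadjF : ∀ x, ¬ s.adj x s.n := fun x h => absurd (w3 _ _ h).2 (lt_irrefl _)
          have hsadjF' : ∀ x, ¬ s.adj s.n x := fun x h => absurd (w3 _ _ h).1 (lt_irrefl _)
          have cfact : ∀ y, y < s.n → ((∃ b, s.lab y = some b ∧ CondB A s b) ↔ A y s.n) := by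
            intro y hy
            constructor
            · rintro ⟨b, hby, u, hu, hub, hA'⟩
              have hla := label_adj (LcwOp.insert a :: rest) s u y s.n hu hy
                (by omega) (by omega) (hub.trans hby.symm)
                (iff_of_false (hsadjF u) (hsadjF y))
                (iff_of_false (hsadjF' u) (hsadjF' y))
              have h1 := hla.1
              rw [hfin u s.n, hfin y s.n] at h1
              exact h1.1 hA'
            · intro hA'
              obtain ⟨b, hb⟩ := w2 y hy
              exact ⟨b, hb, y, hy, hb, hA'⟩
          have hadj2 : ∀ x y, s2.adj x y ↔
              (x < s.n + 1 ∧ y < s.n + 1 ∧ x ≠ y ∧ A x y) := by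
            intro x y
            have hstep : s2.adj x y ↔ sB.adj x y := Iff.rfl
            rw [hstep, hBadj x y]
            have hAadj : sA.adj x y ↔ (x < s.n ∧ y < s.n ∧ x ≠ y ∧ A x y) := hadj x y
            rw [hAadj]
            constructor
            · rintro (⟨hx, hy, hne, hAxy⟩ | ⟨p, q, hpq, hne, hc⟩)
              · exact ⟨by omega, by omega, hne, hAxy⟩
              · rw [joinOps_mem A s p q] at hpq
                obtain ⟨b, hb, rfl, rfl⟩ := hpq
                rcases hc with ⟨hx, hy⟩ | ⟨hx, hy⟩
                · have hxn : x = s.n := (labA_last x).1 hx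
                  obtain ⟨hyn, hyl⟩ := (labA_cs y b).1 hy
                  have hylt : y < s.n := by
                    by_contra hcon
                    rw [w1 y (le_of_not_gt hcon)] at hyl
                    simp at hyl
                  have hAy : A y s.n := (cfact y hylt).1 ⟨b, hyl, hb⟩
                  subst hxn
                  exact ⟨by omega, by omega, hne, hA _ _ hAy⟩
                · have hyn : y = s.n := (labA_last y).1 hy
                  obtain ⟨hxn, hxl⟩ := (labA_cs x b).1 hx
                  have hxlt : x < s.n := by
                    by_contra hcon
                    rw [w1 x (le_of_not_gt hcon)] at hxl
                    simp at hxl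
                  have hAx : A x s.n := (cfact x hxlt).1 ⟨b, hxl, hb⟩
                  subst hyn
                  exact ⟨by omega, by omega, hne, hAx⟩
            · rintro ⟨hx, hy, hne, hAxy⟩
              by_cases hxn : x = s.n
              · subst hxn
                have hylt : y < s.n := by omega
                obtain ⟨b, hb⟩ := w2 y hylt
                exact Or.inr ⟨Fin.last k, b.castSucc,
                  (joinOps_mem A s _ _).2 ⟨b, ⟨y, hylt, hb, hA _ _ hAxy⟩, rfl, rfl⟩, hne,
                  Or.inl ⟨(labA_last _).2 rfl, (labA_cs y b).2 ⟨by omega, hb⟩⟩⟩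
              · by_cases hyn : y = s.n
                · subst hyn
                  have hxlt : x < s.n := by omega
                  obtain ⟨b, hb⟩ := w2 x hxlt
                  exact Or.inr ⟨Fin.last k, b.castSucc,
                    (joinOps_mem A s _ _).2 ⟨b, ⟨x, hxlt, hb, hAxy⟩, rfl, rfl⟩, hne,
                    Or.inr ⟨(labA_cs x b).2 ⟨by omega, hb⟩, (labA_last _).2 rfl⟩⟩
                · exact Or.inl ⟨by omega, by omega, hne, hAxy⟩
          have hrel2 : SimRel A (s.step (LcwOp.insert a)) s2 := by
            refine ⟨hBn.trans hsAn, ?_, fun x y => hadj2 x y⟩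
            intro x
            show (if sB.lab x = some (Fin.last k) then some a.castSucc else sB.lab x)
              = Option.map Fin.castSucc (if x = s.n then some a else s.lab x)
            rw [hBlab]
            by_cases hxn : x = s.n
            · rw [if_pos ((labA_last x).2 hxn), if_pos hxn, Option.map_some]
            · rw [if_neg (fun hl => hxn ((labA_last x).1 hl)), if_neg hxn, hsAlab x,
                if_neg hxn]
          obtain ⟨H1, H2⟩ := ih (s.step (LcwOp.insert a)) s2 hwf1 hrel2 hfin
          have hfoldblock : (insBlock A s a).foldl LcwState.step s' = s2 := by
            show ((joinOps A s ++ [LcwOp.relabel (Fin.last k) a.castSucc]).foldl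
              LcwState.step sA) = s2
            rw [List.foldl_append]
            rfl
          constructor
          · simp only [trf]
            rw [List.foldl_append, hfoldblock]
            exact H1
          · intro t a' h
            simp only [trf] at h ⊢
            have hsplit : insBlock A s a ++ trf A (s.step (LcwOp.insert a)) rest
                = LcwOp.insert (Fin.last k) :: (joinOps A s ++
                    (LcwOp.relabel (Fin.last k) a.castSucc ::
                      trf A (s.step (LcwOp.insert a)) rest)) := by
              show (LcwOp.insert (Fin.last k) ::
                (joinOps A s ++ [LcwOp.relabel (Fin.last k) a.castSucc])) ++ _ = _
              simp [List.append_assoc]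
            rw [hsplit] at h ⊢
            cases t with
            | zero =>
                rw [List.take_zero]
                exact rel_good A s s' ⟨hn, hlab, hadj⟩
            | succ t' =>
                rw [List.getElem?_cons_succ] at h
                rw [List.take_succ_cons]
                show GoodS A (((joinOps A s ++ (LcwOp.relabel (Fin.last k) a.castSucc ::
                  trf A (s.step (LcwOp.insert a)) rest)).take t').foldl LcwState.step sA)
                rcases lt_trichotomy t' (joinOps A s).length with hlt | heq | hgt
                · rw [List.getElem?_append_left hlt] at h
                  have hmem : LcwOp.insert a' ∈ joinOps A s := by
                    have := List.getElem?_eq_some_iff.1 h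
                    obtain ⟨hlen, hget⟩ := this
                    exact hget ▸ List.getElem_mem _
                  obtain ⟨p, q, hpq⟩ := joinOps_are_joins A s _ hmem
                  exact absurd hpq (by simp)
                · rw [heq, List.getElem?_append_right le_rfl, Nat.sub_self,
                    List.getElem?_cons_zero] at h
                  exact absurd (Option.some_inj.1 h) (by simp)
                · rw [List.getElem?_append_right (le_of_lt hgt)] at h
                  obtain ⟨t'', ht''⟩ : ∃ t'', t' - (joinOps A s).length = t'' + 1 :=
                    ⟨t' - (joinOps A s).length - 1, by omega⟩
                  rw [ht'', List.getElem?_cons_succ] at h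
                  have hG := H2 t'' a' h
                  have htake : (joinOps A s ++ (LcwOp.relabel (Fin.last k) a.castSucc ::
                      trf A (s.step (LcwOp.insert a)) rest)).take t'
                      = joinOps A s ++ (LcwOp.relabel (Fin.last k) a.castSucc ::
                        (trf A (s.step (LcwOp.insert a)) rest).take t'') := by
                    rw [List.take_append,
                      List.take_of_length_le (le_of_lt hgt), ht'', List.take_succ_cons]
                  rw [htake, List.foldl_append]
                  exact hG

end Transform

/-- every finite graph `G` has an lcw expression over
`lcw G + 1` labels with a reserved insertion label `ℓ`: every vertex is
inserted with label `ℓ` (and no other vertex carries `ℓ` at that moment), and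
before any further vertex is inserted (and at the end of the expression) all
edges among the already-inserted vertices have been completed. -/
theorem statement_2 {V : Type} [Fintype V] (G : SimpleGraph V) :
    ∃ (e : List (LcwOp (Fin (lcw G + 1)))) (f : V → ℕ) (ℓ : Fin (lcw G + 1)),
      BuildsVia e G f ∧
      (∀ op ∈ e, ∀ a, op = LcwOp.insert a → a = ℓ) ∧
      (∀ t : ℕ, (t = e.length ∨ ∃ a, e[t]? = some (LcwOp.insert a)) →
        (∀ v : ℕ, (runLcw (e.take t)).lab v ≠ some ℓ) ∧
        (∀ u v : ℕ, u < (runLcw (e.take t)).n → v < (runLcw (e.take t)).n →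
          ((runLcw (e.take t)).adj u v ↔ (runLcw e).adj u v))) := by
  classical
  -- an optimal expression exists
  have hne : {k : ℕ | ∃ e : List (LcwOp (Fin k)), Builds e G}.Nonempty :=
    ⟨Fintype.card V, build_exists G⟩
  have hmem : ∃ e : List (LcwOp (Fin (lcw G))), Builds e G := Nat.sInf_mem hne
  obtain ⟨e₀, f₀, hWf0, hinj, hn0, hlt0, hadj0⟩ := hmem
  set A := (runLcw e₀).adj with hAdef
  have hwfF : WfS (runLcw e₀) := wfS_fold e₀ _ wfS_init
  have hAsymm : ∀ x y, A x y → A y x := hwfF.2.2.2.1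
  set e : List (LcwOp (Fin (lcw G + 1))) := trf A (LcwState.init (Fin (lcw G))) e₀ with hedef
  have hrel0 : SimRel A (LcwState.init (Fin (lcw G))) (LcwState.init (Fin (lcw G + 1))) := by
    refine ⟨rfl, fun x => rfl, fun x y => ?_⟩
    exact ⟨fun h => h.elim, fun ⟨h, _⟩ => absurd h (Nat.not_lt_zero x)⟩
  obtain ⟨H1, H2⟩ := trf_main A hAsymm e₀ (LcwState.init (Fin (lcw G)))
    (LcwState.init (Fin (lcw G + 1))) wfS_init hrel0 (fun x y => Iff.rfl)
  have hGoodF : GoodS A (runLcw e) := rel_good A _ _ H1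
  refine ⟨e, f₀, Fin.last (lcw G), ⟨?_, hinj, ?_, ?_, ?_⟩, ?_, ?_⟩
  · exact trf_wfExpr A e₀ _
  · exact (H1.1.trans hn0 :)
  · intro v
    have : (runLcw e).n = (runLcw e₀).n := H1.1
    rw [this]
    exact hlt0 v
  · intro u v
    have h3 := H1.2.2 (f₀ u) (f₀ v)
    constructor
    · intro hG
      exact h3.2 ⟨hlt0 u, hlt0 v, fun hc => G.ne_of_adj hG (hinj hc), (hadj0 u v).1 hG⟩
    · intro h
      exact (hadj0 u v).2 (h3.1 h).2.2.2
  · exact fun op hop a h => trf_insert_lab A e₀ _ op hop a h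
  · intro t ht
    have hGood : GoodS A (runLcw (e.take t)) := by
      rcases ht with rfl | ⟨a, ha⟩
      · rw [List.take_length]
        exact hGoodF
      · exact H2 t a ha
    have hmono : (runLcw (e.take t)).n ≤ (runLcw e).n := by
      have heq : runLcw e = (e.drop t).foldl LcwState.step (runLcw (e.take t)) := by
        rw [runLcw, runLcw, ← List.foldl_append, List.take_append_drop]
      rw [heq]
      exact n_fold_le _ _
    refine ⟨hGood.1, ?_⟩
    intro u v hu hv
    exact (hGood.2 u v hu hv).trans
      ((hGoodF.2 u v (lt_of_lt_of_le hu hmono) (lt_of_lt_of_le hv hmono)).symm)
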